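/- Assume ∫_{(0,∞)} |log u| φ(du) < ∞ and set L := −∫_{(0,∞)} log u · φ(du). Let a ∈ (0,1) be the unique number with π·cot(πa) = L. Then: (a) if α ≤ 1+a, then π·cot(παρ̂) < L if and only if ρ̂ > a/α; (b) if α > 1+a, then π·cot(παρ̂) < L holds for every admissible ρ̂. (By the derivative formula i·Ψ̄′(0) = Γ(α)·(sin(παρ̂)/π)·(π·cot(παρ̂) − L), the inequality π·cot(παρ̂) < L is equivalent to the resurrected process being continuously absorbed at 0 in finite time.) -/
import Mathlib

open MeasureTheory Set
open scoped Real

private lemma cot_anti_iff {x y : ℝ} (hx0 : 0 < x) (hx1 : x < 1) (hy0 : 0 < y)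
    (hy1 : y < 1) :
    Real.cos (π * y) / Real.sin (π * y) < Real.cos (π * x) / Real.sin (π * x) ↔ x < y := by
  have hπ := Real.pi_pos
  have hsx : 0 < Real.sin (π * x) :=
    Real.sin_pos_of_pos_of_lt_pi (by positivity) (by nlinarith)
  have hsy : 0 < Real.sin (π * y) :=
    Real.sin_pos_of_pos_of_lt_pi (by positivity) (by nlinarith)
  rw [div_lt_div_iff₀ hsy hsx]
  have key : Real.sin (π * y - π * x) = Real.sin (π * y) * Real.cos (π * x)
      - Real.cos (π * y) * Real.sin (π * x) := Real.sin_sub _ _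
  constructor
  · intro h
    by_contra hle
    push_neg at hle
    have h1 : Real.sin (π * x - π * y) ≥ 0 :=
      Real.sin_nonneg_of_nonneg_of_le_pi (by nlinarith) (by nlinarith)
    have h2 : Real.sin (π * x - π * y) = -(Real.sin (π * y - π * x)) := by
      rw [← Real.sin_neg]; ring_nf
    nlinarith [key, h2, h1]
  · intro h
    have h1 : 0 < Real.sin (π * y - π * x) :=
      Real.sin_pos_of_pos_of_lt_pi (by nlinarith) (by nlinarith)
    nlinarith [key]

/-- With `L = -∫ log u φ(du)` and `a ∈ (0,1)` the unique solution of `π cot(π a) = L`: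
(a) if `α ≤ 1 + a`, then `π cot(π α ρ̂) < L` iff `ρ̂ > a/α`;
(b) if `α > 1 + a`, then `π cot(π α ρ̂) < L` always holds. -/
theorem absorption_criterion
    (α ρ : ℝ)
    (hadm : (α ∈ Set.Ioo (0 : ℝ) 1 ∧ ρ ∈ Set.Ioo (0 : ℝ) 1) ∨
      (α ∈ Set.Ioo (1 : ℝ) 2 ∧ ρ ∈ Set.Ioo (1 - 1/α) (1/α)) ∨ (α = 1 ∧ ρ = 1/2))
    (ρh : ℝ) (hρh : ρh = 1 - ρ)
    (φ : Measure ℝ) [IsProbabilityMeasure φ] (hφ : φ (Set.Iic 0) = 0)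
    (hlog : IntegrableOn (fun u : ℝ => |Real.log u|) (Set.Ioi 0) φ)
    (L : ℝ) (hL : L = - ∫ u in Set.Ioi (0 : ℝ), Real.log u ∂φ)
    (a : ℝ) (ha : a ∈ Set.Ioo (0 : ℝ) 1)
    (hacot : π * (Real.cos (π * a) / Real.sin (π * a)) = L) :
    (α ≤ 1 + a →
      (π * (Real.cos (π * (α * ρh)) / Real.sin (π * (α * ρh))) < L ↔ a / α < ρh))
    ∧ (1 + a < α →
      π * (Real.cos (π * (α * ρh)) / Real.sin (π * (α * ρh))) < L) := by
  obtain ⟨ha0, ha1⟩ := ha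
  have hπ := Real.pi_pos
  -- establish α > 0 and αρ̂ ∈ (0,1)
  have hkey : 0 < α ∧ 0 < α * ρh ∧ α * ρh < 1 := by
    rcases hadm with ⟨⟨h1, h2⟩, ⟨h3, h4⟩⟩ | ⟨⟨h1, h2⟩, ⟨h3, h4⟩⟩ | ⟨h1, h2⟩
    · subst hρh
      refine ⟨h1, by nlinarith, by nlinarith⟩
    · subst hρh
      have hα : (0:ℝ) < α := by linarith
      have : α * (1/α) = 1 := by field_simp
      refine ⟨hα, by nlinarith, by nlinarith⟩
    · subst hρh; subst h1; subst h2; norm_num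
  obtain ⟨hα, hr0, hr1⟩ := hkey
  have main : π * (Real.cos (π * (α * ρh)) / Real.sin (π * (α * ρh))) < L ↔ a < α * ρh := by
    rw [← hacot, mul_lt_mul_iff_right₀ hπ]
    exact cot_anti_iff ha0 ha1 hr0 hr1
  constructor
  · intro _
    rw [main, div_lt_iff₀ hα]
    constructor <;> intro h <;> nlinarith
  · intro hlt
    rw [main]
    rcases hadm with ⟨⟨h1, h2⟩, _⟩ | ⟨⟨h1, h2⟩, ⟨h3, h4⟩⟩ | ⟨h1, h2⟩
    · linarith
    · subst hρh
      have : α * (1 - 1/α) = α - 1 := by field_simp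
      nlinarith
    · linarith
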